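/- Scaled one-sided 2D HLLC positivity (Lemma 4.2): for any parameters ζ₁, ζ₂ > 0, any two admissible states U₀, U₁ ∈ G, any unit vector n ∈ ℝ², and any λ > 0 satisfying λ · max{α_n(U₀), α_n(U₁)} ≤ 1, one has ζ₁U₀ − λ(F^hllc(ζ₁U₀, ζ₂U₁; n) − F(ζ₁U₀)·n) ∈ G. -/

import Mathlib

open scoped RealInnerProductSpace

noncomputable section

/-- A 2D state `U = (ρ, m, E)` with momentum vector `m ∈ ℝ²`. -/
abbrev St2 : Type := ℝ × EuclideanSpace ℝ (Fin 2) × ℝ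

/-- The admissible set `G = {(ρ, m, E) : ρ > 0, E − ‖m‖²/(2ρ) > 0}`. -/
def admG2 : Set St2 := {U | 0 < U.1 ∧ 0 < U.2.2 - ‖U.2.1‖ ^ 2 / (2 * U.1)}

/-- The pressure `p = (γ−1)(E − ‖m‖²/(2ρ))`. -/
def press2 (γ : ℝ) (U : St2) : ℝ := (γ - 1) * (U.2.2 - ‖U.2.1‖ ^ 2 / (2 * U.1))

/-- The sound speed `√(γ p / ρ)`. -/
def sound2 (γ : ℝ) (U : St2) : ℝ := Real.sqrt (γ * press2 γ U / U.1)

/-- The normal velocity `q(U) = u·n = (m·n)/ρ`. -/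
def qvel (U : St2) (n : EuclideanSpace ℝ (Fin 2)) : ℝ := ⟪U.2.1, n⟫ / U.1

/-- The directional Euler flux `F(U)·n = (ρq, q m + p n, (E+p)q)`. -/
def eulerFn (γ : ℝ) (U : St2) (n : EuclideanSpace ℝ (Fin 2)) : St2 :=
  (U.1 * qvel U n, qvel U n • U.2.1 + press2 γ U • n,
    (U.2.2 + press2 γ U) * qvel U n)

/-- `α_n(U) = |u·n| + √(γp/ρ)`. -/
def alphaN (γ : ℝ) (U : St2) (n : EuclideanSpace ℝ (Fin 2)) : ℝ :=
  |qvel U n| + sound2 γ U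

/-- Left wave speed of the 2D HLLC flux. -/
def SL2 (γ : ℝ) (UL UR : St2) (n : EuclideanSpace ℝ (Fin 2)) : ℝ :=
  min (qvel UL n - sound2 γ UL) (qvel UR n - sound2 γ UR)

/-- Right wave speed of the 2D HLLC flux. -/
def SR2 (γ : ℝ) (UL UR : St2) (n : EuclideanSpace ℝ (Fin 2)) : ℝ :=
  max (qvel UL n + sound2 γ UL) (qvel UR n + sound2 γ UR)

/-- Middle wave speed of the 2D HLLC flux. -/
def Sstar2 (γ : ℝ) (UL UR : St2) (n : EuclideanSpace ℝ (Fin 2)) : ℝ :=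
  (press2 γ UR - press2 γ UL + UL.1 * qvel UL n * (SL2 γ UL UR n - qvel UL n)
      - UR.1 * qvel UR n * (SR2 γ UL UR n - qvel UR n)) /
    (UL.1 * (SL2 γ UL UR n - qvel UL n) - UR.1 * (SR2 γ UL UR n - qvel UR n))

/-- 2D HLLC intermediate state. -/
def Ustar2 (γ : ℝ) (Si Sst : ℝ) (Ui : St2) (n : EuclideanSpace ℝ (Fin 2)) : St2 :=
  ((Si - qvel Ui n) / (Si - Sst)) •
    ((Ui.1, Ui.2.1 + (Ui.1 * (Sst - qvel Ui n)) • n,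
      Ui.2.2 + Ui.1 * (Sst - qvel Ui n) *
        (Sst + press2 γ Ui / (Ui.1 * (Si - qvel Ui n)))) : St2)

/-- 2D intermediate flux `F_{*i} = F(U_i)·n + S_i (U_{*i} − U_i)`. -/
def Fstar2 (γ : ℝ) (Si Sst : ℝ) (Ui : St2) (n : EuclideanSpace ℝ (Fin 2)) : St2 :=
  eulerFn γ Ui n + Si • (Ustar2 γ Si Sst Ui n - Ui)

/-- The 2D HLLC numerical flux in direction `n`. -/
def Fhllc2 (γ : ℝ) (UL UR : St2) (n : EuclideanSpace ℝ (Fin 2)) : St2 :=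
  if 0 ≤ SL2 γ UL UR n then eulerFn γ UL n
  else if 0 ≤ Sstar2 γ UL UR n then Fstar2 γ (SL2 γ UL UR n) (Sstar2 γ UL UR n) UL n
  else if 0 ≤ SR2 γ UL UR n then Fstar2 γ (SR2 γ UL UR n) (Sstar2 γ UL UR n) UR n
  else eulerFn γ UR n

end
lemma admG2_add {U V : St2} (hU : U ∈ admG2) (hV : V ∈ admG2) : U + V ∈ admG2 := by
  obtain ⟨hρU, heU⟩ := hU
  obtain ⟨hρV, heV⟩ := hV
  have h1 : ‖U.2.1‖^2 < 2 * U.1 * U.2.2 := by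
    have := heU; rw [sub_pos, div_lt_iff₀ (by positivity)] at this; linarith
  have h2 : ‖V.2.1‖^2 < 2 * V.1 * V.2.2 := by
    have := heV; rw [sub_pos, div_lt_iff₀ (by positivity)] at this; linarith
  have hin : ⟪U.2.1, V.2.1⟫ ≤ ‖U.2.1‖ * ‖V.2.1‖ := real_inner_le_norm _ _
  have hnorm : ‖U.2.1 + V.2.1‖^2 = ‖U.2.1‖^2 + 2*⟪U.2.1, V.2.1⟫ + ‖V.2.1‖^2 :=
    norm_add_sq_real _ _
  constructor
  · exact add_pos hρU hρV
  · show 0 < (U.2.2 + V.2.2) - ‖U.2.1 + V.2.1‖^2 / (2 * (U.1 + V.1))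
    rw [sub_pos, div_lt_iff₀ (by positivity), hnorm]
    nlinarith [sq_nonneg (V.1 * ‖U.2.1‖ - U.1 * ‖V.2.1‖), mul_pos hρU hρV,
      norm_nonneg U.2.1, norm_nonneg V.2.1, mul_pos hρU hρV,
      mul_lt_mul_of_pos_left h1 hρV, mul_lt_mul_of_pos_left h2 hρU]

lemma admG2_smul {U : St2} (hU : U ∈ admG2) {c : ℝ} (hc : 0 < c) : c • U ∈ admG2 := by
  obtain ⟨hρ, he⟩ := hU
  constructor
  · show 0 < c * U.1; exact mul_pos hc hρ
  · show 0 < c * U.2.2 - ‖c • U.2.1‖^2 / (2 * (c * U.1))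
    have : ‖c • U.2.1‖^2 = c^2 * ‖U.2.1‖^2 := by rw [norm_smul]; rw [mul_pow, Real.norm_eq_abs, sq_abs]
    rw [this]
    have : c^2 * ‖U.2.1‖^2 / (2 * (c * U.1)) = c * (‖U.2.1‖^2 / (2 * U.1)) := by
      field_simp
    rw [this]
    have := mul_lt_mul_of_pos_left he hc
    simp only [mul_zero] at this
    linarith [this]

lemma admG2_smul_add {U V : St2} (hU : U ∈ admG2) (hV : V ∈ admG2)
    {a b : ℝ} (ha : 0 ≤ a) (hb : 0 < b) : a • U + b • V ∈ admG2 := by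
  rcases ha.eq_or_lt with h | h
  · simpa [← h] using admG2_smul hV hb
  · exact admG2_add (admG2_smul hU h) (admG2_smul hV hb)

lemma admG2_add_smul {U : St2} (hU : U ∈ admG2) {V : St2} (hV : V ∈ admG2)
    {c : ℝ} (hc : 0 ≤ c) : U + c • V ∈ admG2 := by
  rcases hc.eq_or_lt with h | h
  · simpa [← h] using hU
  · exact admG2_add hU (admG2_smul hV h)

lemma key_ineq (γ ρ p c a s : ℝ) (hγ : 1 < γ) (hρ : 0 < ρ) (hp : 0 < p)
    (hc : 0 < c) (hc2 : c^2 * ρ = γ * p) (hca : c ≤ |a|) :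
    0 < p/(γ-1) + ρ*s^2/2 + s*(p/a) := by
  have ha : a ≠ 0 := by
    intro h; rw [h, abs_zero] at hca; linarith
  have hγ1 : γ - 1 ≠ 0 := by intro h; rw [sub_eq_zero] at h; exact absurd h.symm hγ.ne
  have hc' : c ≠ 0 := hc.ne'
  have h1 : -(|s| * p / c) ≤ s * (p/a) := by
    have habs : |s * (p/a)| ≤ |s| * p / c := by
      rw [abs_mul, abs_div, abs_of_pos hp, mul_div_assoc]
      exact mul_le_mul_of_nonneg_left (div_le_div_of_nonneg_left hp.le hc hca) (abs_nonneg s)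
    linarith [neg_abs_le (s * (p/a)), abs_nonneg (s * (p/a))]
  have hsuff : 0 < p/(γ-1) + ρ*s^2/2 - |s| * p / c := by
    set u := |s| with hu
    have hus : s^2 = u^2 := (sq_abs s).symm
    have hrw : p/(γ-1) + ρ*s^2/2 - u * p / c
        = (2*c*p + c*(γ-1)*ρ*u^2 - 2*(γ-1)*u*p) / (2*c*(γ-1)) := by
      rw [hus]; field_simp
    rw [hrw]
    apply div_pos _ (by nlinarith)
    have e1 : γ*c*(2*c*p + c*(γ-1)*ρ*u^2 - 2*(γ-1)*u*p)
        = (γ-1)*p*(γ*u-c)^2 + p*c^2*(γ+1) := by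
      linear_combination (γ*(γ-1)*u^2) * hc2
    have t1 : 0 ≤ (γ-1)*p*(γ*u-c)^2 :=
      mul_nonneg (mul_nonneg (by linarith) hp.le) (sq_nonneg _)
    have t2 : 0 < p*c^2*(γ+1) := mul_pos (mul_pos hp (pow_pos hc 2)) (by linarith)
    have h2 : 0 < γ*c*(2*c*p + c*(γ-1)*ρ*u^2 - 2*(γ-1)*u*p) := by rw [e1]; linarith
    nlinarith [h2, mul_pos (show (0:ℝ) < γ by linarith) hc]
  linarith

lemma press2_pos {γ : ℝ} (hγ : 1 < γ) {U : St2} (hU : U ∈ admG2) : 0 < press2 γ U :=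
  mul_pos (by linarith) hU.2

lemma sound2_pos {γ : ℝ} (hγ : 1 < γ) {U : St2} (hU : U ∈ admG2) : 0 < sound2 γ U :=
  Real.sqrt_pos.mpr (div_pos (mul_pos (by linarith) (press2_pos hγ hU)) hU.1)

lemma sound2_sq {γ : ℝ} (hγ : 1 < γ) {U : St2} (hU : U ∈ admG2) :
    (sound2 γ U)^2 * U.1 = γ * press2 γ U := by
  have h : (sound2 γ U)^2 = γ * press2 γ U / U.1 :=
    Real.sq_sqrt (div_pos (mul_pos (by linarith) (press2_pos hγ hU)) hU.1).le
  rw [h, div_mul_cancel₀ _ hU.1.ne']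

lemma ustar_mem {γ : ℝ} (hγ : 1 < γ) {U : St2} (hU : U ∈ admG2)
    {n : EuclideanSpace ℝ (Fin 2)} (hn : ‖n‖ = 1) {Si Sst : ℝ}
    (h1 : sound2 γ U ≤ |Si - qvel U n|)
    (h2 : 0 < (Si - qvel U n) * (Si - Sst)) :
    Ustar2 γ Si Sst U n ∈ admG2 := by
  obtain ⟨ρ, m, E⟩ := U
  obtain ⟨hρ, he⟩ := hU
  simp only at hρ he
  set q : ℝ := qvel (ρ, m, E) n with hqdef
  set p : ℝ := press2 γ (ρ, m, E) with hpdef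
  set c : ℝ := sound2 γ (ρ, m, E) with hcdef
  have hp : 0 < p := press2_pos hγ ⟨hρ, he⟩
  have hc : 0 < c := sound2_pos hγ ⟨hρ, he⟩
  have hc2 : c^2 * ρ = γ * p := sound2_sq hγ ⟨hρ, he⟩
  have ha : Si - q ≠ 0 := by
    intro h; rw [h, zero_mul] at h2; exact lt_irrefl 0 h2
  have hr : Si - Sst ≠ 0 := by
    intro h; rw [h, mul_zero] at h2; exact lt_irrefl 0 h2
  have hk : 0 < (Si - q) / (Si - Sst) := by
    rcases mul_pos_iff.mp h2 with ⟨x, y⟩ | ⟨x, y⟩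
    · exact div_pos x y
    · exact div_pos_of_neg_of_neg x y
  have hinner : ⟪m, n⟫ = ρ * q := by
    rw [hqdef]; show ⟪m, n⟫ = ρ * (⟪m, n⟫ / ρ); field_simp
  have hexp : ‖m + (ρ*(Sst - q)) • n‖^2
      = ‖m‖^2 + 2*(ρ*(Sst-q))*(ρ*q) + (ρ*(Sst-q))^2 := by
    rw [norm_add_sq_real, real_inner_smul_right, hinner, norm_smul, hn,
      mul_pow, Real.norm_eq_abs, sq_abs]
    ring
  constructor
  · show 0 < ((Si - q)/(Si - Sst)) * ρ
    exact mul_pos hk hρ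
  · show 0 < ((Si - q)/(Si - Sst)) * (E + ρ*(Sst - q)*(Sst + p/(ρ*(Si - q))))
      - ‖((Si - q)/(Si - Sst)) • (m + (ρ*(Sst - q)) • n)‖^2
        / (2 * (((Si - q)/(Si - Sst)) * ρ))
    have hksq : ‖((Si - q)/(Si - Sst)) • (m + (ρ*(Sst - q)) • n)‖^2
        = ((Si - q)/(Si - Sst))^2 * ‖m + (ρ*(Sst - q)) • n‖^2 := by
      rw [norm_smul, mul_pow, Real.norm_eq_abs, sq_abs]
    rw [hksq, hexp]
    have key : ((Si - q)/(Si - Sst)) * (E + ρ*(Sst - q)*(Sst + p/(ρ*(Si - q))))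
        - ((Si - q)/(Si - Sst))^2 * (‖m‖^2 + 2*(ρ*(Sst-q))*(ρ*q) + (ρ*(Sst-q))^2)
          / (2 * (((Si - q)/(Si - Sst)) * ρ))
        = ((Si - q)/(Si - Sst))
            * ((E - ‖m‖^2/(2*ρ)) + ρ*(Sst-q)^2/2 + (Sst-q)*(p/(Si - q))) := by
      field_simp
      ring
    rw [key]
    apply mul_pos hk
    have hE : E - ‖m‖^2/(2*ρ) = p/(γ-1) := by
      have hγ1 : γ - 1 ≠ 0 := by intro h; rw [sub_eq_zero] at h; exact absurd h.symm hγ.ne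
      rw [hpdef]; show E - ‖m‖^2/(2*ρ) = (γ-1)*(E - ‖m‖^2/(2*ρ))/(γ-1)
      rw [mul_div_cancel_left₀ _ hγ1]
    rw [hE]
    exact key_ineq γ ρ p c (Si - q) (Sst - q) hγ hρ hp hc hc2 h1

lemma fstar_repr (γ Si Sst : ℝ) (U : St2) (n : EuclideanSpace ℝ (Fin 2))
    (hρ : U.1 ≠ 0) (ha : Si - qvel U n ≠ 0) (hr : Si - Sst ≠ 0) :
    Fstar2 γ Si Sst U n =
      (Sst * (Ustar2 γ Si Sst U n).1,
       Sst • (Ustar2 γ Si Sst U n).2.1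
         + (press2 γ U + U.1 * (Si - qvel U n) * (Sst - qvel U n)) • n,
       Sst * ((Ustar2 γ Si Sst U n).2.2
         + (press2 γ U + U.1 * (Si - qvel U n) * (Sst - qvel U n)))) := by
  obtain ⟨ρ, m, E⟩ := U
  simp only at hρ ha hr
  set q : ℝ := qvel (ρ, m, E) n with hqdef
  set p : ℝ := press2 γ (ρ, m, E) with hpdef
  refine Prod.ext ?_ (Prod.ext ?_ ?_)
  · show ρ * q + Si * (((Si - q)/(Si - Sst)) * ρ - ρ)
      = Sst * (((Si - q)/(Si - Sst)) * ρ)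
    field_simp
    ring
  · show q • m + p • n + Si • (((Si - q)/(Si - Sst)) • (m + (ρ*(Sst - q)) • n) - m)
      = Sst • (((Si - q)/(Si - Sst)) • (m + (ρ*(Sst - q)) • n))
        + (p + ρ * (Si - q) * (Sst - q)) • n
    match_scalars
    · field_simp; ring
    · field_simp; ring
  · show (E + p) * q + Si * (((Si - q)/(Si - Sst)) * (E + ρ*(Sst - q)*(Sst + p/(ρ*(Si - q)))) - E)
      = Sst * (((Si - q)/(Si - Sst)) * (E + ρ*(Sst - q)*(Sst + p/(ρ*(Si - q))))
          + (p + ρ * (Si - q) * (Sst - q)))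
    field_simp
    ring

lemma qvel_smul {c : ℝ} (hc : c ≠ 0) (U : St2) (n : EuclideanSpace ℝ (Fin 2)) :
    qvel (c • U) n = qvel U n := by
  show ⟪c • U.2.1, n⟫ / (c * U.1) = ⟪U.2.1, n⟫ / U.1
  rw [real_inner_smul_left, mul_div_mul_left _ _ hc]

lemma press2_smul (γ : ℝ) {c : ℝ} (hc : c ≠ 0) (U : St2) (hρ : U.1 ≠ 0) :
    press2 γ (c • U) = c * press2 γ U := by
  show (γ-1) * (c * U.2.2 - ‖c • U.2.1‖^2 / (2*(c * U.1)))
    = c * ((γ-1) * (U.2.2 - ‖U.2.1‖^2 / (2*U.1)))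
  rw [norm_smul, Real.norm_eq_abs, mul_pow, sq_abs]
  field_simp

lemma sound2_smul (γ : ℝ) {c : ℝ} (hc : c ≠ 0) (U : St2) (hρ : U.1 ≠ 0) :
    sound2 γ (c • U) = sound2 γ U := by
  rw [sound2, sound2, press2_smul γ hc U hρ]
  congr 1
  show γ * (c * press2 γ U) / (c * U.1) = _
  rw [mul_left_comm, mul_div_mul_left _ _ hc]

lemma alphaN_smul (γ : ℝ) {c : ℝ} (hc : c ≠ 0) (U : St2) (hρ : U.1 ≠ 0)
    (n : EuclideanSpace ℝ (Fin 2)) : alphaN γ (c • U) n = alphaN γ U n := by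
  rw [alphaN, alphaN, qvel_smul hc U n, sound2_smul γ hc U hρ]


lemma aux_star_lt {Sst SL N D : ℝ} (hD : D < 0) (h : Sst * D = N)
    (hN : N - SL * D < 0) : SL < Sst := by nlinarith

lemma aux_star_gt {Sst SR N D : ℝ} (hD : D < 0) (h : Sst * D = N)
    (hN : 0 < N - SR * D) : Sst < SR := by nlinarith

lemma aux_coeff (lam q c : ℝ) (hlam : 0 < lam) (h : lam * (|q| + c) ≤ 1) :
    -1 ≤ lam * (q - c) := by
  nlinarith [mul_nonneg hlam.le (by linarith [neg_abs_le q] : (0:ℝ) ≤ q + |q|)]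

lemma aux_NL (γ pL pR ρL ρR qL qR cL cR SL SR : ℝ) (hγ : 1 < γ)
    (hpL : 0 < pL) (hpR : 0 < pR) (hρL : 0 < ρL) (hρR : 0 < ρR)
    (hcL : 0 < cL) (hcR : 0 < cR)
    (hcL2 : cL^2 * ρL = γ * pL) (hcR2 : cR^2 * ρR = γ * pR)
    (h1 : SL ≤ qL - cL) (h2 : SL ≤ qR - cR) (h4 : qR + cR ≤ SR) :
    (pR - pL + ρL * qL * (SL - qL) - ρR * qR * (SR - qR))
      - SL * (ρL * (SL - qL) - ρR * (SR - qR)) < 0 := by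
  have e0 : cL^2 ≤ (SL - qL)^2 := by nlinarith
  have e1 : ρL * cL^2 ≤ ρL * (SL - qL)^2 := mul_le_mul_of_nonneg_left e0 hρL.le
  have e2 : ρR * (cR * cR) ≤ ρR * ((SR - qR) * (qR - SL)) :=
    mul_le_mul_of_nonneg_left
      (mul_le_mul (by linarith) (by linarith) hcR.le (by linarith)) hρR.le
  nlinarith [e1, e2]

lemma aux_NR (γ pL pR ρL ρR qL qR cL cR SL SR : ℝ) (hγ : 1 < γ)
    (hpL : 0 < pL) (hpR : 0 < pR) (hρL : 0 < ρL) (hρR : 0 < ρR)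
    (hcL : 0 < cL) (hcR : 0 < cR)
    (hcL2 : cL^2 * ρL = γ * pL) (hcR2 : cR^2 * ρR = γ * pR)
    (h1 : SL ≤ qL - cL) (h3 : qL + cL ≤ SR) (h4 : qR + cR ≤ SR) :
    0 < (pR - pL + ρL * qL * (SL - qL) - ρR * qR * (SR - qR))
      - SR * (ρL * (SL - qL) - ρR * (SR - qR)) := by
  have e0 : cR^2 ≤ (SR - qR)^2 := by nlinarith
  have e2 : ρR * cR^2 ≤ ρR * (SR - qR)^2 := mul_le_mul_of_nonneg_left e0 hρR.le
  have e1 : ρL * (cL * cL) ≤ ρL * ((qL - SL) * (SR - qL)) :=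
    mul_le_mul_of_nonneg_left
      (mul_le_mul (by linarith) (by linarith) hcL.le (by linarith)) hρL.le
  nlinarith [e1, e2]

set_option maxHeartbeats 2000000 in
/-- Lemma 4.2: scaled one-sided 2D HLLC positivity. -/
theorem hllc2_scaled_one_sided_positivity (γ : ℝ) (hγ : 1 < γ)
    (ζ₁ ζ₂ : ℝ) (hζ₁ : 0 < ζ₁) (hζ₂ : 0 < ζ₂)
    (U₀ U₁ : St2) (hU₀ : U₀ ∈ admG2) (hU₁ : U₁ ∈ admG2)
    (n : EuclideanSpace ℝ (Fin 2)) (hn : ‖n‖ = 1)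
    (lam : ℝ) (hlam : 0 < lam)
    (hcfl : lam * max (alphaN γ U₀ n) (alphaN γ U₁ n) ≤ 1) :
    ζ₁ • U₀ - lam • (Fhllc2 γ (ζ₁ • U₀) (ζ₂ • U₁) n - eulerFn γ (ζ₁ • U₀) n)
      ∈ admG2 := by
  have hαL0 : alphaN γ (ζ₁ • U₀) n = alphaN γ U₀ n :=
    alphaN_smul γ hζ₁.ne' U₀ hU₀.1.ne' n
  have hαR0 : alphaN γ (ζ₂ • U₁) n = alphaN γ U₁ n :=
    alphaN_smul γ hζ₂.ne' U₁ hU₁.1.ne' n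
  have hαnnL : 0 ≤ alphaN γ U₀ n := by
    have := sound2_pos hγ hU₀
    have := abs_nonneg (qvel U₀ n)
    rw [alphaN]; linarith
  have hcflL : lam * alphaN γ (ζ₁ • U₀) n ≤ 1 := by
    rw [hαL0]
    calc lam * alphaN γ U₀ n ≤ lam * max (alphaN γ U₀ n) (alphaN γ U₁ n) :=
          mul_le_mul_of_nonneg_left (le_max_left _ _) hlam.le
      _ ≤ 1 := hcfl
  have hcflR : lam * alphaN γ (ζ₂ • U₁) n ≤ 1 := by
    rw [hαR0]
    calc lam * alphaN γ U₁ n ≤ lam * max (alphaN γ U₀ n) (alphaN γ U₁ n) :=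
          mul_le_mul_of_nonneg_left (le_max_right _ _) hlam.le
      _ ≤ 1 := hcfl
  set UL : St2 := ζ₁ • U₀ with hULdef
  set UR : St2 := ζ₂ • U₁ with hURdef
  have hUL : UL ∈ admG2 := admG2_smul hU₀ hζ₁
  have hUR : UR ∈ admG2 := admG2_smul hU₁ hζ₂
  have hρL : 0 < UL.1 := hUL.1
  have hρR : 0 < UR.1 := hUR.1
  set qL : ℝ := qvel UL n with hqLdef
  set qR : ℝ := qvel UR n with hqRdef
  set cL : ℝ := sound2 γ UL with hcLdef
  set cR : ℝ := sound2 γ UR with hcRdef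
  set pL : ℝ := press2 γ UL with hpLdef
  set pR : ℝ := press2 γ UR with hpRdef
  have hpLpos : 0 < pL := press2_pos hγ hUL
  have hpRpos : 0 < pR := press2_pos hγ hUR
  have hcLpos : 0 < cL := sound2_pos hγ hUL
  have hcRpos : 0 < cR := sound2_pos hγ hUR
  have hcL2 : cL^2 * UL.1 = γ * pL := sound2_sq hγ hUL
  have hcR2 : cR^2 * UR.1 = γ * pR := sound2_sq hγ hUR
  have hαLe : alphaN γ UL n = |qL| + cL := rfl
  have hαRe : alphaN γ UR n = |qR| + cR := rfl
  rw [hαLe] at hcflL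
  rw [hαRe] at hcflR
  set SL : ℝ := SL2 γ UL UR n with hSLdef
  set SR : ℝ := SR2 γ UL UR n with hSRdef
  set Sst : ℝ := Sstar2 γ UL UR n with hSstdef
  have hSLe : SL = min (qL - cL) (qR - cR) := rfl
  have hSRe : SR = max (qL + cL) (qR + cR) := rfl
  have hSL1 : SL ≤ qL - cL := hSLe ▸ min_le_left _ _
  have hSL2 : SL ≤ qR - cR := hSLe ▸ min_le_right _ _
  have hSR1 : qL + cL ≤ SR := hSRe ▸ le_max_left _ _
  have hSR2 : qR + cR ≤ SR := hSRe ▸ le_max_right _ _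
  have hDneg : UL.1 * (SL - qL) - UR.1 * (SR - qR) < 0 := by
    have h1 : UL.1 * (SL - qL) < 0 :=
      mul_neg_of_pos_of_neg hρL (by linarith)
    have h2 : 0 < UR.1 * (SR - qR) :=
      mul_pos hρR (by linarith)
    linarith
  have hSstD : Sst * (UL.1 * (SL - qL) - UR.1 * (SR - qR))
      = pR - pL + UL.1 * qL * (SL - qL) - UR.1 * qR * (SR - qR) := by
    rw [hSstdef, Sstar2]
    exact div_mul_cancel₀ _ hDneg.ne
  have hNL : (pR - pL + UL.1 * qL * (SL - qL) - UR.1 * qR * (SR - qR))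
      - SL * (UL.1 * (SL - qL) - UR.1 * (SR - qR)) < 0 := by
    exact aux_NL γ pL pR UL.1 UR.1 qL qR cL cR SL SR hγ hpLpos hpRpos hρL hρR
      hcLpos hcRpos hcL2 hcR2 hSL1 hSL2 hSR2
  have hNR : 0 < (pR - pL + UL.1 * qL * (SL - qL) - UR.1 * qR * (SR - qR))
      - SR * (UL.1 * (SL - qL) - UR.1 * (SR - qR)) := by
    exact aux_NR γ pL pR UL.1 UR.1 qL qR cL cR SL SR hγ hpLpos hpRpos hρL hρR
      hcLpos hcRpos hcL2 hcR2 hSL1 hSR1 hSR2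
  have hstarL : SL < Sst := aux_star_lt hDneg hSstD hNL
  have hstarR : Sst < SR := aux_star_gt hDneg hSstD hNR
  -- coefficient bounds
  have h1L : -1 ≤ lam * (qL - cL) := aux_coeff lam qL cL hlam hcflL
  have h1R : -1 ≤ lam * (qR - cR) := aux_coeff lam qR cR hlam hcflR
  have hlamSL : -1 ≤ lam * SL := by
    rcases le_total (qL - cL) (qR - cR) with h | h
    · rw [hSLe, min_eq_left h]; exact h1L
    · rw [hSLe, min_eq_right h]; exact h1R
  have hA : 0 ≤ 1 + lam * SL := by linarith
  -- star state memberships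
  have hUsL : Ustar2 γ SL Sst UL n ∈ admG2 := by
    apply ustar_mem hγ hUL hn
    · exact le_abs.mpr (Or.inr (by linarith))
    · exact mul_pos_of_neg_of_neg (by linarith) (by linarith)
  have hUsR : Ustar2 γ SR Sst UR n ∈ admG2 := by
    apply ustar_mem hγ hUR hn
    · exact le_abs.mpr (Or.inl (by linarith))
    · exact mul_pos (by linarith) (by linarith)
  have hFsL : Fstar2 γ SL Sst UL n
      = eulerFn γ UL n + SL • (Ustar2 γ SL Sst UL n - UL) := rfl
  have hFsR : Fstar2 γ SR Sst UR n
      = eulerFn γ UR n + SR • (Ustar2 γ SR Sst UR n - UR) := rfl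
  -- middle-wave consistency
  have hPP : pL + UL.1 * (SL - qL) * (Sst - qL)
      = pR + UR.1 * (SR - qR) * (Sst - qR) := by
    linear_combination hSstD
  have hcons : Fstar2 γ SR Sst UR n = Fstar2 γ SL Sst UL n
      + Sst • (Ustar2 γ SR Sst UR n - Ustar2 γ SL Sst UL n) := by
    rw [fstar_repr γ SR Sst UR n hρR.ne' (by linarith) (by linarith),
        fstar_repr γ SL Sst UL n hρL.ne' (by linarith) (by linarith)]
    simp only [← hqLdef, ← hqRdef, ← hpLdef, ← hpRdef]
    refine Prod.ext ?_ (Prod.ext ?_ ?_)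
    · show Sst * (Ustar2 γ SR Sst UR n).1
        = Sst * (Ustar2 γ SL Sst UL n).1
          + Sst * ((Ustar2 γ SR Sst UR n).1 - (Ustar2 γ SL Sst UL n).1)
      ring
    · show Sst • (Ustar2 γ SR Sst UR n).2.1 + (pR + UR.1 * (SR - qR) * (Sst - qR)) • n
        = (Sst • (Ustar2 γ SL Sst UL n).2.1 + (pL + UL.1 * (SL - qL) * (Sst - qL)) • n)
          + Sst • ((Ustar2 γ SR Sst UR n).2.1 - (Ustar2 γ SL Sst UL n).2.1)
      rw [← hPP]
      module
    · show Sst * ((Ustar2 γ SR Sst UR n).2.2 + (pR + UR.1 * (SR - qR) * (Sst - qR)))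
        = Sst * ((Ustar2 γ SL Sst UL n).2.2 + (pL + UL.1 * (SL - qL) * (Sst - qL)))
          + Sst * ((Ustar2 γ SR Sst UR n).2.2 - (Ustar2 γ SL Sst UL n).2.2)
      linear_combination (-Sst) * hPP
  -- case analysis on the HLLC flux
  unfold Fhllc2
  simp only [← hSLdef, ← hSRdef, ← hSstdef]
  by_cases hc1 : 0 ≤ SL
  · rw [if_pos hc1]
    simpa using hUL
  · rw [if_neg hc1]
    have hSLneg : SL < 0 := not_le.mp hc1
    by_cases hc2 : 0 ≤ Sst
    · rw [if_pos hc2, hFsL]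
      have hid : UL - lam • (eulerFn γ UL n + SL • (Ustar2 γ SL Sst UL n - UL)
            - eulerFn γ UL n)
          = (1 + lam * SL) • UL + (-(lam * SL)) • Ustar2 γ SL Sst UL n := by
        module
      rw [hid]
      exact admG2_smul_add hUL hUsL hA
        (by linarith [mul_pos hlam (neg_pos.mpr hSLneg)])
    · rw [if_neg hc2]
      have hSstneg : Sst < 0 := not_le.mp hc2
      by_cases hc3 : 0 ≤ SR
      · rw [if_pos hc3, hcons, hFsL]
        have hid : UL - lam • (eulerFn γ UL n + SL • (Ustar2 γ SL Sst UL n - UL)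
              + Sst • (Ustar2 γ SR Sst UR n - Ustar2 γ SL Sst UL n) - eulerFn γ UL n)
            = ((1 + lam * SL) • UL + (lam * (Sst - SL)) • Ustar2 γ SL Sst UL n)
              + (-(lam * Sst)) • Ustar2 γ SR Sst UR n := by
          module
        rw [hid]
        exact admG2_add_smul
          (admG2_smul_add hUL hUsL hA (mul_pos hlam (by linarith)))
          hUsR (by linarith [mul_pos hlam (neg_pos.mpr hSstneg)])
      · rw [if_neg hc3]
        have hSRneg : SR < 0 := not_le.mp hc3
        have hkey : eulerFn γ UR n = eulerFn γ UL n
            + SL • (Ustar2 γ SL Sst UL n - UL)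
            + Sst • (Ustar2 γ SR Sst UR n - Ustar2 γ SL Sst UL n)
            - SR • (Ustar2 γ SR Sst UR n - UR) := by
          have h1 : eulerFn γ UR n + SR • (Ustar2 γ SR Sst UR n - UR)
              = eulerFn γ UL n + SL • (Ustar2 γ SL Sst UL n - UL)
                + Sst • (Ustar2 γ SR Sst UR n - Ustar2 γ SL Sst UL n) := by
            rw [← hFsR, hcons, hFsL]
          linear_combination (norm := module) h1
        rw [hkey]
        have hid : UL - lam • (eulerFn γ UL n
              + SL • (Ustar2 γ SL Sst UL n - UL)
              + Sst • (Ustar2 γ SR Sst UR n - Ustar2 γ SL Sst UL n)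
              - SR • (Ustar2 γ SR Sst UR n - UR) - eulerFn γ UL n)
            = (((1 + lam * SL) • UL + (lam * (Sst - SL)) • Ustar2 γ SL Sst UL n)
              + (lam * (SR - Sst)) • Ustar2 γ SR Sst UR n)
              + (-(lam * SR)) • UR := by
          module
        rw [hid]
        exact admG2_add_smul
          (admG2_add_smul
            (admG2_smul_add hUL hUsL hA (mul_pos hlam (by linarith)))
            hUsR (mul_nonneg hlam.le (by linarith)))
          hUR (by linarith [mul_pos hlam (neg_pos.mpr hSRneg)])
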